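/- Let X ∈ ℝ^{m×m} be symmetric, P ∈ ℝ^{k×k} symmetric positive definite, ρ > 0, C ∈ ℝ^{k×m}, and let s, t ∈ ℝ satisfy |t| ≤ s. If the symmetric block matrix [X, sCᵀ; sC, −ρP] is negative definite, then the symmetric block matrix [X, tCᵀ; tC, −ρP] is also negative definite. -/

import Mathlib

open Matrix

noncomputable section

private lemma quad_form_eval {m k : ℕ} (X : Matrix (Fin m) (Fin m) ℝ)
    (P : Matrix (Fin k) (Fin k) ℝ) (ρ : ℝ) (C : Matrix (Fin k) (Fin m) ℝ) (r : ℝ)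
    (x : Fin m → ℝ) (y : Fin k → ℝ) :
    dotProduct (Sum.elim x y) ((-(fromBlocks X (r • Cᵀ) (r • C) (-(ρ • P)))) *ᵥ Sum.elim x y)
      = (x ⬝ᵥ (-X) *ᵥ x + ρ * (y ⬝ᵥ P *ᵥ y)) - r * (x ⬝ᵥ Cᵀ *ᵥ y + y ⬝ᵥ C *ᵥ x) := by
  simp [fromBlocks_neg, fromBlocks_mulVec, sumElim_dotProduct_sumElim, neg_mulVec,
    smul_mulVec, dotProduct_neg, dotProduct_smul, dotProduct_add, smul_eq_mul]
  ring

/-- Monotonicity of the LMI in the off-diagonal scaling (key step of Lemma 1 of the paper):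
if `[X, sCᵀ; sC, −ρP] ≺ 0` and `|t| ≤ s`, then `[X, tCᵀ; tC, −ρP] ≺ 0`. -/
theorem stmt1 {m k : ℕ} (X : Matrix (Fin m) (Fin m) ℝ) (hX : X.IsHermitian)
    (P : Matrix (Fin k) (Fin k) ℝ) (hP : P.PosDef) (ρ : ℝ) (hρ : 0 < ρ)
    (C : Matrix (Fin k) (Fin m) ℝ) (s t : ℝ) (hts : |t| ≤ s)
    (h : (-(fromBlocks X (s • Cᵀ) (s • C) (-(ρ • P)))).PosDef) :
    (-(fromBlocks X (t • Cᵀ) (t • C) (-(ρ • P)))).PosDef := by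
  refine posDef_iff_dotProduct_mulVec.mpr ⟨?_, ?_⟩
  · -- Hermitian
    have h1 : (fromBlocks X (t • Cᵀ) (t • C) (-(ρ • P))).IsHermitian := by
      rw [isHermitian_fromBlocks_iff]
      refine ⟨hX, ?_, ?_, (by
        have : (ρ • P).IsHermitian := by
          unfold Matrix.IsHermitian
          rw [conjTranspose_smul, hP.1.eq, star_trivial]
        exact this.neg)⟩ <;>
        · ext i j; simp [conjTranspose_apply, star]
    exact h1.neg
  · intro v hv
    -- decompose v
    set x : Fin m → ℝ := v ∘ Sum.inl with hx
    set y : Fin k → ℝ := v ∘ Sum.inr with hy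
    have hvel : Sum.elim x y = v := Sum.elim_comp_inl_inr v
    have hvel' : Sum.elim x (-y) ≠ 0 := by
      intro hcon
      apply hv
      rw [← hvel]
      ext i
      cases i with
      | inl a => have := congrFun hcon (Sum.inl a); simpa using this
      | inr b =>
        have := congrFun hcon (Sum.inr b)
        simp at this ⊢
        simpa using this
    have hv' : Sum.elim x y ≠ 0 := by rw [hvel]; exact hv
    have hs1 := (posDef_iff_dotProduct_mulVec.mp h).2 (x := Sum.elim x y) hv'
    have hs2 := (posDef_iff_dotProduct_mulVec.mp h).2 (x := Sum.elim x (-y)) hvel'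
    rw [show star (Sum.elim x y) = Sum.elim x y from rfl] at hs1
    rw [show star (Sum.elim x (-y)) = Sum.elim x (-y) from rfl] at hs2
    rw [quad_form_eval] at hs1 hs2
    rw [← hvel, show star (Sum.elim x y) = Sum.elim x y from rfl, quad_form_eval]
    set A := x ⬝ᵥ (-X) *ᵥ x + ρ * (y ⬝ᵥ P *ᵥ y) with hA
    set B := x ⬝ᵥ Cᵀ *ᵥ y + y ⬝ᵥ C *ᵥ x with hB
    have hs2' : 0 < A + s * B := by
      have : x ⬝ᵥ (-X) *ᵥ x + ρ * ((-y) ⬝ᵥ P *ᵥ (-y)) - s * (x ⬝ᵥ Cᵀ *ᵥ (-y) + (-y) ⬝ᵥ C *ᵥ x)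
          = A + s * B := by
        simp [hA, hB, mulVec_neg, dotProduct_neg, neg_dotProduct]
        ring
      linarith [this ▸ hs2]
    have habs : t * B ≤ s * |B| := by
      calc t * B ≤ |t * B| := le_abs_self _
        _ = |t| * |B| := abs_mul t B
        _ ≤ s * |B| := by
            apply mul_le_mul_of_nonneg_right hts (abs_nonneg B)
    rcases abs_cases B with ⟨hb, _⟩ | ⟨hb, _⟩
    · rw [hb] at habs; linarith
    · rw [hb] at habs; linarith
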